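/- For every real ν ≥ 1, one has ((ν+1)/2)·log((ν+1)/2) − ((ν−1)/2)·log((ν−1)/2) < log ν + 1, where log is the natural logarithm (with the convention that the term ((ν−1)/2)·log((ν−1)/2) vanishes at ν = 1, which is automatic in Lean since Real.log 0 = 0). -/

import Mathlib

/-- For ν ≥ 1, the single-mode entropy function satisfies f(ν) < log ν + 1. -/
theorem entropy_lt_log_add_one (ν : ℝ) (hν : 1 ≤ ν) :
    ((ν + 1) / 2) * Real.log ((ν + 1) / 2) -
      ((ν - 1) / 2) * Real.log ((ν - 1) / 2) < Real.log ν + 1 := by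
  rcases eq_or_lt_of_le hν with h1 | h1
  · rw [← h1]; norm_num
  · set b : ℝ := (ν - 1) / 2 with hb
    have hb0 : 0 < b := by rw [hb]; linarith
    have ha : (ν + 1) / 2 = b + 1 := by rw [hb]; ring
    rw [ha]
    have hratio : Real.log ((b + 1) / b) < (b + 1) / b - 1 := by
      apply Real.log_lt_sub_one_of_pos (by positivity)
      have : (1 : ℝ) < (b + 1) / b := by
        rw [lt_div_iff₀ hb0]; linarith
      linarith
    have hdiv : Real.log ((b + 1) / b) = Real.log (b + 1) - Real.log b :=
      Real.log_div (by linarith) (ne_of_gt hb0)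
    have hsub : (b + 1) / b - 1 = 1 / b := by field_simp; ring
    have hkey : b * (Real.log (b + 1) - Real.log b) < 1 := by
      rw [← hdiv]
      calc b * Real.log ((b + 1) / b) < b * (1 / b) := by
            rw [← hsub]; exact (mul_lt_mul_iff_right₀ hb0).mpr hratio
        _ = 1 := by field_simp
    have hlog : Real.log (b + 1) < Real.log ν := by
      apply Real.log_lt_log (by positivity)
      rw [hb]; linarith
    nlinarith [hkey, hlog]
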